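/- The stopped process n ↦ M(min{n, T}), where M(n) = A(n)·B(n)·C(n)/φ(A(n),C(n)) + n/4, is a supermartingale with respect to the filtration (F_n), i.e. E[M(min{n+1, T}) | F_n] ≤ M(min{n, T}) for every n ≥ 0. -/

import Mathlib

open MeasureTheory ProbabilityTheory
open scoped ENNReal

/-- The function `φ` from the paper (on integers): `φ (x, y) = max (x, y)` if `x ≠ y`
and `φ (x, x) = 2x² / (2x - 1)`. -/
noncomputable def phi (x y : ℤ) : ℝ :=
  if x = y then 2 * (x : ℝ) ^ 2 / (2 * (x : ℝ) - 1) else max (x : ℝ) (y : ℝ)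

noncomputable def fM (x y z : ℤ) : ℝ := ((x * y * z : ℤ) : ℝ) / phi x z

lemma phi_same (x : ℤ) : phi x x = 2 * (x:ℝ)^2 / (2*(x:ℝ) - 1) := by simp [phi]

lemma phi_ne {x z : ℤ} (h : x ≠ z) : phi x z = max (x:ℝ) (z:ℝ) := by simp [phi, h]

lemma fM_nonneg {x y z : ℤ} (hx : 0 ≤ x) (hy : 0 ≤ y) (hz : 0 ≤ z) : 0 ≤ fM x y z := by
  unfold fM
  by_cases h : x = z
  · subst h
    rcases eq_or_lt_of_le hx with h0 | h0
    · simp [phi_same, ← h0]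
    · apply div_nonneg
      · push_cast; positivity
      · rw [phi_same]
        apply div_nonneg (by positivity)
        have : (1:ℝ) ≤ (x:ℝ) := by exact_mod_cast h0
        linarith
  · apply div_nonneg
    · push_cast; positivity
    · rw [phi_ne h]
      have : (0:ℝ) ≤ (x:ℝ) := by exact_mod_cast hx
      exact le_trans this (le_max_left _ _)

lemma abs_fM_le (x y z : ℤ) : |fM x y z| ≤ 2 * |(x:ℝ)| * |(y:ℝ)| * |(z:ℝ)| := by
  unfold fM
  have hnum : |((x * y * z : ℤ) : ℝ)| = |(x:ℝ)| * |(y:ℝ)| * |(z:ℝ)| := by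
    push_cast; rw [abs_mul, abs_mul]
  by_cases h : x = z
  · subst h
    rw [phi_same]
    by_cases hx : x = 0
    · subst hx; simp
    · have h1 : (1:ℝ) ≤ |(x:ℝ)| := by
        rw [← Int.cast_abs]; exact_mod_cast Int.one_le_abs hx
      have h2 : |2*(x:ℝ) - 1| ≤ 2*|(x:ℝ)| + 1 := by
        calc |2*(x:ℝ) - 1| ≤ |2*(x:ℝ)| + |(1:ℝ)| := abs_sub _ _
        _ = 2*|(x:ℝ)| + 1 := by rw [abs_mul]; norm_num
      have h3 : (1:ℝ) ≤ |2*(x:ℝ) - 1| := by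
        have : (2*x - 1 : ℤ) ≠ 0 := by omega
        have := Int.one_le_abs this
        rw [show 2*(x:ℝ) - 1 = ((2*x - 1 : ℤ) : ℝ) from by push_cast; ring, ← Int.cast_abs]
        exact_mod_cast this
      have hd : |2*(x:ℝ)^2/(2*(x:ℝ)-1)| = 2*|(x:ℝ)|^2/|2*(x:ℝ)-1| := by
        rw [abs_div, abs_of_nonneg (by positivity : (0:ℝ) ≤ 2*(x:ℝ)^2), sq_abs]
      rw [abs_div, hd, hnum]
      rw [div_le_iff₀ (by positivity)]
      rw [show 2 * |(x:ℝ)| * |(y:ℝ)| * |(x:ℝ)| * (2 * |(x:ℝ)| ^ 2 / |2 * (x:ℝ) - 1|)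
            = 2 * |(x:ℝ)| * |(y:ℝ)| * |(x:ℝ)| * (2 * |(x:ℝ)| ^ 2) / |2 * (x:ℝ) - 1| from by ring,
          le_div_iff₀ (by linarith)]
      have hy0 : (0:ℝ) ≤ |(y:ℝ)| := abs_nonneg _
      have h4 : |(x:ℝ)| * |(y:ℝ)| * |(x:ℝ)| * |2*(x:ℝ)-1|
          ≤ |(x:ℝ)| * |(y:ℝ)| * |(x:ℝ)| * (2*|(x:ℝ)|+1) :=
        mul_le_mul_of_nonneg_left h2 (by positivity)
      have h5 : |(x:ℝ)| * |(x:ℝ)| * (2*|(x:ℝ)|+1) ≤ 4*|(x:ℝ)|^4 := by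
        nlinarith [h1, mul_nonneg (mul_nonneg (abs_nonneg (x:ℝ)) (abs_nonneg (x:ℝ))) (sub_nonneg.2 h1),
          mul_nonneg (mul_nonneg (mul_nonneg (abs_nonneg (x:ℝ)) (abs_nonneg (x:ℝ))) (abs_nonneg (x:ℝ))) (sub_nonneg.2 h1)]
      have h6 : |(y:ℝ)| * (|(x:ℝ)| * |(x:ℝ)| * (2*|(x:ℝ)|+1)) ≤ |(y:ℝ)| * (4*|(x:ℝ)|^4) :=
        mul_le_mul_of_nonneg_left h5 hy0
      nlinarith [h4, h6]
  · rw [phi_ne h, abs_div, hnum]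
    by_cases hm : max (x:ℝ) (z:ℝ) = 0
    · rw [hm]; simp; positivity
    · have : max (x:ℝ) (z:ℝ) = ((max x z : ℤ) : ℝ) := by
        rw [Int.cast_max]
      have h1 : (1:ℝ) ≤ |max (x:ℝ) (z:ℝ)| := by
        rw [this, ← Int.cast_abs]
        have : max x z ≠ 0 := by
          intro h0; apply hm; rw [this, h0]; simp
        exact_mod_cast Int.one_le_abs this
      have hA : (0:ℝ) ≤ |(x:ℝ)| * |(y:ℝ)| * |(z:ℝ)| := by positivity
      calc |(x:ℝ)| * |(y:ℝ)| * |(z:ℝ)| / |max (x:ℝ) (z:ℝ)|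
          ≤ |(x:ℝ)| * |(y:ℝ)| * |(z:ℝ)| := div_le_self hA h1
        _ ≤ 2 * |(x:ℝ)| * |(y:ℝ)| * |(z:ℝ)| := by nlinarith

lemma key (x y z : ℤ) (hx : 1 ≤ x) (hy : 1 ≤ y) (hz : 1 ≤ z) :
    fM (x-1) y z + fM (x+1) (y-1) z + fM x (y+1) (z-1) + fM x y (z+1) + 1 ≤ 4 * fM x y z := by
  have hX : (1:ℝ) ≤ (x:ℝ) := by exact_mod_cast hx
  have hY : (1:ℝ) ≤ (y:ℝ) := by exact_mod_cast hy
  have hZ : (1:ℝ) ≤ (z:ℝ) := by exact_mod_cast hz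
  unfold fM
  rcases lt_trichotomy x z with h | h | h
  · rcases eq_or_lt_of_le (Int.add_one_le_iff.mpr h) with h1 | h1
    · -- z = x + 1
      subst h1
      rw [show (x+1-1 : ℤ) = x from by ring] at *
      rw [phi_ne (by omega : x - 1 ≠ x + 1), phi_same, phi_same,
          phi_ne (by omega : x ≠ x + 1 + 1), phi_ne (by omega : x ≠ x + 1)]
      rw [show max ((x-1:ℤ):ℝ) ((x+1:ℤ):ℝ) = (x:ℝ)+1 from by push_cast; rw [max_eq_right (by linarith)],
          show max ((x:ℤ):ℝ) ((x+1+1:ℤ):ℝ) = (x:ℝ)+1+1 from by push_cast; rw [max_eq_right (by linarith)],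
          show max ((x:ℤ):ℝ) ((x+1:ℤ):ℝ) = (x:ℝ)+1 from by push_cast; rw [max_eq_right (by linarith)]]
      push_cast
      have d1 : (x:ℝ) ≠ 0 := by linarith
      have d2 : (x:ℝ) + 1 ≠ 0 := by linarith
      have d3 : (x:ℝ) + 1 + 1 ≠ 0 := by linarith
      have d4 : 2*(x:ℝ) - 1 ≠ 0 := by linarith
      have d5 : 2*((x:ℝ)+1) - 1 ≠ 0 := by linarith
      field_simp
      nlinarith [mul_nonneg (mul_nonneg (by linarith : (0:ℝ) ≤ (y:ℝ)) (by positivity : (0:ℝ) ≤ ((x:ℝ)+1)^2)) (by nlinarith : (0:ℝ) ≤ (2*(x:ℝ)-1)*(x:ℝ)^2)]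
    · -- z ≥ x + 2
      have h2 : x + 2 ≤ z := by omega
      have hZx : (x:ℝ) + 2 ≤ (z:ℝ) := by exact_mod_cast h2
      rw [phi_ne (by omega : x - 1 ≠ z), phi_ne (by omega : x + 1 ≠ z),
          phi_ne (by omega : x ≠ z - 1), phi_ne (by omega : x ≠ z + 1), phi_ne (by omega : x ≠ z)]
      rw [show max ((x-1:ℤ):ℝ) ((z:ℤ):ℝ) = (z:ℝ) from by push_cast; rw [max_eq_right (by linarith)],
          show max ((x+1:ℤ):ℝ) ((z:ℤ):ℝ) = (z:ℝ) from by push_cast; rw [max_eq_right (by linarith)],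
          show max ((x:ℤ):ℝ) ((z-1:ℤ):ℝ) = (z:ℝ)-1 from by push_cast; rw [max_eq_right (by linarith)],
          show max ((x:ℤ):ℝ) ((z+1:ℤ):ℝ) = (z:ℝ)+1 from by push_cast; rw [max_eq_right (by linarith)],
          show max ((x:ℤ):ℝ) ((z:ℤ):ℝ) = (z:ℝ) from by push_cast; rw [max_eq_right (by linarith)]]
      push_cast
      have d1 : (z:ℝ) ≠ 0 := by linarith
      have d2 : (z:ℝ) - 1 ≠ 0 := by linarith
      have d3 : (z:ℝ) + 1 ≠ 0 := by linarith
      rw [show ((x:ℝ)-1)*↑y*↑z/(↑z) = ((x:ℝ)-1)*↑y from by field_simp,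
         show ((x:ℝ)+1)*(↑y-1)*↑z/(↑z) = ((x:ℝ)+1)*(↑y-1) from by field_simp,
         show ((x:ℝ)*↑y*(↑z+1))/(↑z+1) = (x:ℝ)*↑y from by field_simp,
         show ((x:ℝ)*(↑y+1)*(↑z-1))/(↑z-1) = (x:ℝ)*(↑y+1) from by field_simp,
         show ((x:ℝ)*↑y*↑z)/(↑z) = (x:ℝ)*↑y from by field_simp]
      nlinarith [sq_nonneg (z:ℝ)]
  · -- x = z
    subst h
    rw [phi_ne (by omega : x - 1 ≠ x), phi_ne (by omega : x + 1 ≠ x),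
        phi_ne (by omega : x ≠ x - 1), phi_ne (by omega : x ≠ x + 1), phi_same]
    rw [show max ((x-1:ℤ):ℝ) ((x:ℤ):ℝ) = (x:ℝ) from by push_cast; rw [max_eq_right (by linarith)],
        show max ((x+1:ℤ):ℝ) ((x:ℤ):ℝ) = (x:ℝ)+1 from by push_cast; rw [max_eq_left (by linarith)],
        show max ((x:ℤ):ℝ) ((x-1:ℤ):ℝ) = (x:ℝ) from by push_cast; rw [max_eq_left (by linarith)],
        show max ((x:ℤ):ℝ) ((x+1:ℤ):ℝ) = (x:ℝ)+1 from by push_cast; rw [max_eq_right (by linarith)]]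
    push_cast
    have d1 : (x:ℝ) ≠ 0 := by linarith
    have d2 : (x:ℝ) + 1 ≠ 0 := by linarith
    have d3 : 2*(x:ℝ) - 1 ≠ 0 := by linarith
    field_simp
    nlinarith [sq_nonneg (x:ℝ)]
  · rcases eq_or_lt_of_le (Int.add_one_le_iff.mpr h) with h1 | h1
    · -- x = z + 1
      have h1' : x = z + 1 := h1.symm
      subst h1'
      rw [show (z+1-1 : ℤ) = z from by ring] at *
      rw [phi_same, phi_ne (by omega : z + 1 + 1 ≠ z), phi_ne (by omega : z + 1 ≠ z - 1),
          phi_same, phi_ne (by omega : z + 1 ≠ z)]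
      rw [show max ((z+1+1:ℤ):ℝ) ((z:ℤ):ℝ) = (z:ℝ)+1+1 from by push_cast; rw [max_eq_left (by linarith)],
          show max ((z+1:ℤ):ℝ) ((z-1:ℤ):ℝ) = (z:ℝ)+1 from by push_cast; rw [max_eq_left (by linarith)],
          show max ((z+1:ℤ):ℝ) ((z:ℤ):ℝ) = (z:ℝ)+1 from by push_cast; rw [max_eq_left (by linarith)]]
      push_cast
      have d1 : (z:ℝ) ≠ 0 := by linarith
      have d2 : (z:ℝ) + 1 ≠ 0 := by linarith
      have d3 : (z:ℝ) + 1 + 1 ≠ 0 := by linarith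
      have d4 : 2*(z:ℝ) - 1 ≠ 0 := by linarith
      have d5 : 2*((z:ℝ)+1) - 1 ≠ 0 := by linarith
      rw [show ((z:ℝ)+1)*↑y*↑z/(↑z+1) = ↑y*(z:ℝ) from by field_simp]
      field_simp
      nlinarith [mul_nonneg (mul_nonneg (by linarith : (0:ℝ) ≤ (y:ℝ)) (by positivity : (0:ℝ) ≤ ((z:ℝ)+1)^2)) (by nlinarith : (0:ℝ) ≤ (2*(z:ℝ)-1)*(z:ℝ)^2)]
    · -- x ≥ z + 2
      have h2 : z + 2 ≤ x := by omega
      have hXz : (z:ℝ) + 2 ≤ (x:ℝ) := by exact_mod_cast h2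
      rw [phi_ne (by omega : x - 1 ≠ z), phi_ne (by omega : x + 1 ≠ z),
          phi_ne (by omega : x ≠ z - 1), phi_ne (by omega : x ≠ z + 1), phi_ne (by omega : x ≠ z)]
      rw [show max ((x-1:ℤ):ℝ) ((z:ℤ):ℝ) = (x:ℝ)-1 from by push_cast; rw [max_eq_left (by linarith)],
          show max ((x+1:ℤ):ℝ) ((z:ℤ):ℝ) = (x:ℝ)+1 from by push_cast; rw [max_eq_left (by linarith)],
          show max ((x:ℤ):ℝ) ((z-1:ℤ):ℝ) = (x:ℝ) from by push_cast; rw [max_eq_left (by linarith)],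
          show max ((x:ℤ):ℝ) ((z+1:ℤ):ℝ) = (x:ℝ) from by push_cast; rw [max_eq_left (by linarith)],
          show max ((x:ℤ):ℝ) ((z:ℤ):ℝ) = (x:ℝ) from by push_cast; rw [max_eq_left (by linarith)]]
      push_cast
      have d1 : (x:ℝ) ≠ 0 := by linarith
      have d2 : (x:ℝ) - 1 ≠ 0 := by linarith
      have d3 : (x:ℝ) + 1 ≠ 0 := by linarith
      rw [show ((x:ℝ)-1)*↑y*↑z/(↑x-1) = ↑y*(z:ℝ) from by field_simp,
         show ((x:ℝ)+1)*(↑y-1)*↑z/(↑x+1) = (↑y-1)*(z:ℝ) from by field_simp,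
         show ((x:ℝ))*(↑y+1)*(↑z-1)/(↑x) = (↑y+1)*((z:ℝ)-1) from by field_simp,
         show ((x:ℝ))*↑y*(↑z+1)/(↑x) = ↑y*((z:ℝ)+1) from by field_simp,
         show ((x:ℝ))*↑y*↑z/(↑x) = ↑y*(z:ℝ) from by field_simp]
      nlinarith [sq_nonneg (x:ℝ)]

set_option maxHeartbeats 1600000 in
/-- With `M n = A n * B n * C n / φ (A n, C n) + n / 4`, the stopped
process `n ↦ M (min (n, T))` is a supermartingale with respect to the filtration
generated by the steps: `E[M (min (n+1, T)) | ℱ n] ≤ M (min (n, T))` a.s. for all `n`. -/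
theorem stmt_15 (a b c : ℕ) (ha : 0 < a) (hb : 0 < b) (hc : 0 < c)
{Ω : Type*} [MeasurableSpace Ω] (μ : Measure Ω) [IsProbabilityMeasure μ]
    (ξ : ℕ → Ω → ℤ × ℤ × ℤ)
    (hmeas : ∀ n, Measurable (ξ n))
    (hindep : iIndepFun ξ μ)
    (hunif : ∀ n, ∀ v ∈ ({(-1, 0, 0), (1, -1, 0), (0, 1, -1), (0, 0, 1)} : Set (ℤ × ℤ × ℤ)),
      μ {ω | ξ n ω = v} = 1 / 4)
    (A B C : ℕ → Ω → ℤ)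
    (hA : ∀ n ω, A (n + 1) ω = A n ω + (ξ n ω).1)
    (hB : ∀ n ω, B (n + 1) ω = B n ω + (ξ n ω).2.1)
    (hC : ∀ n ω, C (n + 1) ω = C n ω + (ξ n ω).2.2)
    (T : Ω → ℕ)
    (hT : ∀ ω, T ω = sInf {n | A n ω * B n ω * C n ω = 0})
    (hA0 : ∀ ω, A 0 ω = (a : ℤ)) (hB0 : ∀ ω, B 0 ω = (b : ℤ)) (hC0 : ∀ ω, C 0 ω = (c : ℤ))
    (ℱ : ℕ → MeasurableSpace Ω)
    (hℱ : ∀ n, ℱ n = ⨆ k ∈ Finset.range n, MeasurableSpace.comap (ξ k) inferInstance)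
    (M : ℕ → Ω → ℝ)
    (hM : ∀ n ω, M n ω = ((A n ω * B n ω * C n ω : ℤ) : ℝ) / phi (A n ω) (C n ω)
      + (n : ℝ) / 4) :
    ∀ n : ℕ, μ[fun ω => M (min (n + 1) (T ω)) ω|ℱ n]
      ≤ᵐ[μ] fun ω => M (min n (T ω)) ω := by
  classical
  have hM' : ∀ j ω, M j ω = fM (A j ω) (B j ω) (C j ω) + (j:ℝ)/4 := hM
  -- τ : truncated stopping time
  set τ : ℕ → Ω → ℕ := fun N ω =>
    if ∃ k ≤ N, A k ω * B k ω * C k ω = 0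
    then sInf {k | A k ω * B k ω * C k ω = 0} else N with hτ_def
  have hτ_le : ∀ N ω, τ N ω ≤ N := by
    intro N ω
    simp only [hτ_def]
    split
    · next h => obtain ⟨k, hk, h0⟩ := h; exact le_trans (Nat.sInf_le h0) hk
    · exact le_rfl
  have hτ_first : ∀ N ω k, k < τ N ω → A k ω * B k ω * C k ω ≠ 0 := by
    intro N ω k hk
    revert hk; simp only [hτ_def]
    split
    · next h => intro hk; exact Nat.notMem_of_lt_sInf hk
    · next h => intro hk h0; exact h ⟨k, le_of_lt hk, h0⟩
  have hτ_stop : ∀ N ω, τ N ω < N → A (τ N ω) ω * B (τ N ω) ω * C (τ N ω) ω = 0 := by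
    intro N ω
    simp only [hτ_def]
    split
    · next h =>
      intro _
      obtain ⟨k, _, h0⟩ := h
      exact Nat.sInf_mem (⟨k, h0⟩ : {k | A k ω * B k ω * C k ω = 0}.Nonempty)
    · intro h'; exact absurd h' (lt_irrefl N)
  have hτ_eq_self : ∀ N ω, (∀ k < N, A k ω * B k ω * C k ω ≠ 0) ↔ τ N ω = N := by
    intro N ω
    constructor
    · intro h
      simp only [hτ_def]
      split
      · next hex =>
        obtain ⟨k, hk, h0⟩ := hex
        have hkN : k = N := by
          by_contra hne
          exact h k (lt_of_le_of_ne hk hne) h0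
        subst hkN
        refine le_antisymm (Nat.sInf_le h0) ?_
        by_contra hlt
        push_neg at hlt
        exact h _ hlt (Nat.sInf_mem (⟨k, h0⟩ : {k | A k ω * B k ω * C k ω = 0}.Nonempty))
      · rfl
    · intro h k hk
      exact hτ_first N ω k (by rw [h]; exact hk)
  -- basic measurability
  have hle : ∀ k, ℱ k ≤ ‹MeasurableSpace Ω› := by
    intro k; rw [hℱ]
    exact iSup₂_le fun i _ => (hmeas i).comap_le
  have hξF : ∀ {k N : ℕ}, k < N → Measurable[ℱ N] (ξ k) := by
    intro k N hk
    rw [measurable_iff_comap_le, hℱ]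
    exact le_iSup₂ (f := fun i (_ : i ∈ Finset.range N) => MeasurableSpace.comap (ξ i) inferInstance)
      k (Finset.mem_range.mpr hk)
  have hABC : ∀ {k N : ℕ}, k ≤ N →
      Measurable[ℱ N] (A k) ∧ Measurable[ℱ N] (B k) ∧ Measurable[ℱ N] (C k) := by
    intro k N hk
    induction k with
    | zero =>
      refine ⟨?_, ?_, ?_⟩
      · rw [show A 0 = fun _ => (a:ℤ) from funext hA0]; exact measurable_const
      · rw [show B 0 = fun _ => (b:ℤ) from funext hB0]; exact measurable_const
      · rw [show C 0 = fun _ => (c:ℤ) from funext hC0]; exact measurable_const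
    | succ k ih =>
      obtain ⟨h1, h2, h3⟩ := ih (Nat.le_of_succ_le hk)
      have hξ : Measurable[ℱ N] (ξ k) := hξF hk
      refine ⟨?_, ?_, ?_⟩
      · rw [show A (k+1) = fun ω => A k ω + (ξ k ω).1 from funext (hA k)]
        exact h1.add (measurable_fst.comp hξ)
      · rw [show B (k+1) = fun ω => B k ω + (ξ k ω).2.1 from funext (hB k)]
        exact h2.add (measurable_fst.comp (measurable_snd.comp hξ))
      · rw [show C (k+1) = fun ω => C k ω + (ξ k ω).2.2 from funext (hC k)]
        exact h3.add (measurable_snd.comp (measurable_snd.comp hξ))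
  have hPmeasF : ∀ {k N : ℕ}, k ≤ N →
      Measurable[ℱ N] (fun ω => A k ω * B k ω * C k ω) := by
    intro k N hk
    obtain ⟨h1, h2, h3⟩ := hABC hk
    exact (h1.mul h2).mul h3
  have hMmeasF : ∀ {j N : ℕ}, j ≤ N → Measurable[ℱ N] (M j) := by
    intro j N hj
    obtain ⟨h1, h2, h3⟩ := hABC hj
    rw [show M j = fun ω => fM (A j ω) (B j ω) (C j ω) + (j:ℝ)/4 from funext (hM' j)]
    refine Measurable.add ?_ measurable_const
    have : (fun ω => fM (A j ω) (B j ω) (C j ω))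
        = (fun p : ℤ × ℤ × ℤ => fM p.1 p.2.1 p.2.2) ∘ (fun ω => (A j ω, B j ω, C j ω)) := rfl
    rw [this]
    exact (measurable_of_countable _).comp (h1.prodMk (h2.prodMk h3))
  -- measurability of level sets of τ
  have hne_meas : ∀ {k N : ℕ}, k ≤ N → MeasurableSet[ℱ N] {ω | A k ω * B k ω * C k ω ≠ 0} :=
    fun hk => ((hPmeasF hk) (measurableSet_singleton 0)).compl
  have hτset : ∀ N j, MeasurableSet[ℱ N] {ω | τ N ω = j} := by
    intro N j
    rcases lt_trichotomy j N with hj | hj | hj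
    · have : {ω | τ N ω = j} = {ω | A j ω * B j ω * C j ω = 0}
          ∩ ⋂ (k : ℕ) (_ : k < j), {ω | A k ω * B k ω * C k ω ≠ 0} := by
        ext ω
        simp only [Set.mem_setOf_eq, Set.mem_inter_iff, Set.mem_iInter]
        constructor
        · intro h
          refine ⟨h ▸ hτ_stop N ω (h ▸ hj), fun k hk => hτ_first N ω k (h ▸ hk)⟩
        · rintro ⟨h0, hlt⟩
          simp only [hτ_def]
          rw [if_pos ⟨j, le_of_lt hj, h0⟩]
          refine le_antisymm (Nat.sInf_le h0) ?_
          by_contra hcon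
          push_neg at hcon
          exact hlt _ hcon
            (Nat.sInf_mem (⟨j, h0⟩ : {k | A k ω * B k ω * C k ω = 0}.Nonempty))
      rw [this]
      exact MeasurableSet.inter ((hPmeasF (le_of_lt hj)) (measurableSet_singleton 0))
        (MeasurableSet.iInter fun k => MeasurableSet.iInter fun hk =>
          hne_meas (le_of_lt (lt_trans hk hj)))
    · subst hj
      have : {ω | τ j ω = j} = ⋂ (k : ℕ) (_ : k < j), {ω | A k ω * B k ω * C k ω ≠ 0} := by
        ext ω
        simp only [Set.mem_setOf_eq, Set.mem_iInter]
        exact ⟨fun h k hk => (hτ_eq_self j ω).mpr h k hk, fun h => (hτ_eq_self j ω).mp h⟩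
      rw [this]
      exact MeasurableSet.iInter fun k => MeasurableSet.iInter fun hk =>
        hne_meas (le_of_lt hk)
    · have : {ω | τ N ω = j} = ∅ := by
        ext ω
        simp only [Set.mem_setOf_eq, Set.mem_empty_iff_false, iff_false]
        intro h
        exact absurd (h ▸ hτ_le N ω) (not_le.mpr hj)
      rw [this]
      exact @MeasurableSet.empty Ω (ℱ N)
  have hYsm : ∀ N, StronglyMeasurable[ℱ N] (fun ω => M (τ N ω) ω) := by
    intro N
    have hrange : (fun ω => M (τ N ω) ω)
        = fun ω => ∑ j ∈ Finset.range (N+1), Set.indicator {ω' | τ N ω' = j} (M j) ω := by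
      funext ω
      rw [Finset.sum_eq_single (τ N ω)]
      · exact (Set.indicator_of_mem (by simp : ω ∈ {ω' | τ N ω' = τ N ω}) _).symm
      · intro j _ hj
        exact Set.indicator_of_notMem (by simp [Ne.symm hj]) _
      · intro hmem
        exact absurd (Finset.mem_range.mpr (Nat.lt_succ_of_le (hτ_le N ω))) hmem
    rw [hrange]
    apply Measurable.stronglyMeasurable
    apply Finset.measurable_sum
    intro j hj
    exact ((hMmeasF (Nat.lt_succ_iff.mp (Finset.mem_range.mp hj))).indicator (hτset N j))
  -- a.e. steps in the four directions
  have hstep_ae : ∀ᵐ ω ∂μ, ∀ k, ξ k ω ∈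
      ({(-1, 0, 0), (1, -1, 0), (0, 1, -1), (0, 0, 1)} : Set (ℤ × ℤ × ℤ)) := by
    rw [ae_all_iff]
    intro k
    have h1 := hunif k (-1,0,0) (by simp)
    have h2 := hunif k (1,-1,0) (by simp)
    have h3 := hunif k (0,1,-1) (by simp)
    have h4 := hunif k (0,0,1) (by simp)
    have hm : ∀ v : ℤ × ℤ × ℤ, MeasurableSet {ω | ξ k ω = v} :=
      fun v => hmeas k (measurableSet_singleton v)
    have hset : {ω | ξ k ω ∈ ({(-1, 0, 0), (1, -1, 0), (0, 1, -1), (0, 0, 1)}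
        : Set (ℤ × ℤ × ℤ))} = {ω | ξ k ω = (-1,0,0)} ∪ ({ω | ξ k ω = (1,-1,0)}
        ∪ ({ω | ξ k ω = (0,1,-1)} ∪ {ω | ξ k ω = (0,0,1)})) := by
      ext ω; simp [Set.mem_insert_iff]
    have hdisj : ∀ (v : ℤ × ℤ × ℤ) (s : Set Ω), (∀ ω ∈ s, ξ k ω ≠ v) →
        Disjoint {ω | ξ k ω = v} s :=
      fun v s h => Set.disjoint_left.mpr fun ω h1 h2 => (h ω h2) h1
    have hu : μ {ω | ξ k ω ∈ ({(-1, 0, 0), (1, -1, 0), (0, 1, -1), (0, 0, 1)}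
        : Set (ℤ × ℤ × ℤ))} = 1 := by
      rw [hset, measure_union ?d1 ((hm _).union ((hm _).union (hm _))),
        measure_union ?d2 ((hm _).union (hm _)), measure_union ?d3 (hm _),
        h1, h2, h3, h4]
      case d1 =>
        refine hdisj _ _ fun ω hω => ?_
        rcases hω with h | h | h <;> · rw [h]; decide
      case d2 =>
        refine hdisj _ _ fun ω hω => ?_
        rcases hω with h | h <;> · rw [h]; decide
      case d3 =>
        refine hdisj _ _ fun ω hω => ?_
        rw [hω]; decide
      rw [show (1:ℝ≥0∞)/4 = 4⁻¹ from one_div 4]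
      rw [show (1:ℝ≥0∞) = 4 * 4⁻¹ from (ENNReal.mul_inv_cancel (by norm_num) (by norm_num)).symm]
      ring
    rw [ae_iff]
    have : {ω | ¬ ξ k ω ∈ ({(-1, 0, 0), (1, -1, 0), (0, 1, -1), (0, 0, 1)}
        : Set (ℤ × ℤ × ℤ))} = {ω | ξ k ω ∈ ({(-1, 0, 0), (1, -1, 0), (0, 1, -1), (0, 0, 1)}
        : Set (ℤ × ℤ × ℤ))}ᶜ := rfl
    rw [this, measure_compl ?mm (measure_ne_top μ _), hu, measure_univ, tsub_self]
    case mm =>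
      rw [hset]
      exact (hm _).union ((hm _).union ((hm _).union (hm _)))
  -- positivity along the path
  have hpos : ∀ ω, (∀ k, ξ k ω ∈
      ({(-1, 0, 0), (1, -1, 0), (0, 1, -1), (0, 0, 1)} : Set (ℤ × ℤ × ℤ))) →
      ∀ N, (∀ k < N, A k ω * B k ω * C k ω ≠ 0) →
      0 ≤ A N ω ∧ 0 ≤ B N ω ∧ 0 ≤ C N ω := by
    intro ω hg N
    induction N with
    | zero =>
      intro _
      refine ⟨?_, ?_, ?_⟩
      · rw [hA0 ω]; exact Int.natCast_nonneg a
      · rw [hB0 ω]; exact Int.natCast_nonneg b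
      · rw [hC0 ω]; exact Int.natCast_nonneg c
    | succ N ih =>
      intro h
      obtain ⟨p1, p2, p3⟩ := ih (fun k hk => h k (Nat.lt_succ_of_lt hk))
      have h0 := h N (Nat.lt_succ_self N)
      obtain ⟨h4, h5⟩ := mul_ne_zero_iff.mp h0
      obtain ⟨h6, h7⟩ := mul_ne_zero_iff.mp h4
      have e1 := hA N ω
      have e2 := hB N ω
      have e3 := hC N ω
      have hgN := hg N
      simp only [Set.mem_insert_iff, Set.mem_singleton_iff] at hgN
      rcases hgN with hv | hv | hv | hv <;> rw [hv] at e1 e2 e3 <;>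
        simp only [] at e1 e2 e3 <;> refine ⟨?_, ?_, ?_⟩ <;> omega
  have hpos1 : ∀ ω, (∀ k, ξ k ω ∈
      ({(-1, 0, 0), (1, -1, 0), (0, 1, -1), (0, 0, 1)} : Set (ℤ × ℤ × ℤ))) →
      ∀ N, (∀ k ≤ N, A k ω * B k ω * C k ω ≠ 0) →
      1 ≤ A N ω ∧ 1 ≤ B N ω ∧ 1 ≤ C N ω := by
    intro ω hg N h
    obtain ⟨h1, h2, h3⟩ := hpos ω hg N (fun k hk => h k (le_of_lt hk))
    have h0 := h N le_rfl
    refine ⟨?_, ?_, ?_⟩ <;> [skip; skip; skip] <;>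
    · rcases mul_ne_zero_iff.mp h0 with ⟨h4, h5⟩
      rcases mul_ne_zero_iff.mp h4 with ⟨h6, h7⟩
      omega
  -- path bounds
  have hbound : ∀ ω, (∀ k, ξ k ω ∈
      ({(-1, 0, 0), (1, -1, 0), (0, 1, -1), (0, 0, 1)} : Set (ℤ × ℤ × ℤ))) →
      ∀ N, |A N ω| ≤ a + N ∧ |B N ω| ≤ b + N ∧ |C N ω| ≤ c + N := by
    intro ω hg N
    induction N with
    | zero =>
      refine ⟨?_, ?_, ?_⟩
      · rw [hA0 ω, abs_of_nonneg (Int.natCast_nonneg a)]; omega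
      · rw [hB0 ω, abs_of_nonneg (Int.natCast_nonneg b)]; omega
      · rw [hC0 ω, abs_of_nonneg (Int.natCast_nonneg c)]; omega
    | succ N ih =>
      obtain ⟨i1, i2, i3⟩ := ih
      rw [abs_le] at i1 i2 i3
      have e1 := hA N ω
      have e2 := hB N ω
      have e3 := hC N ω
      have hgN := hg N
      simp only [Set.mem_insert_iff, Set.mem_singleton_iff] at hgN
      rcases hgN with hv | hv | hv | hv <;> rw [hv] at e1 e2 e3 <;>
        simp only [] at e1 e2 e3 <;> refine ⟨?_, ?_, ?_⟩ <;> rw [abs_le] <;>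
        constructor <;> omega
  -- bound on M at τ
  have hYbd : ∀ N ω, (∀ k, ξ k ω ∈
      ({(-1, 0, 0), (1, -1, 0), (0, 1, -1), (0, 0, 1)} : Set (ℤ × ℤ × ℤ))) →
      |M (τ N ω) ω| ≤ 2*((a:ℝ)+N)*((b:ℝ)+N)*((c:ℝ)+N) + N := by
    intro N ω hg
    have hj := hτ_le N ω
    obtain ⟨b1, b2, b3⟩ := hbound ω hg (τ N ω)
    have hca : |((A (τ N ω) ω : ℤ) : ℝ)| ≤ (a:ℝ) + N := by
      rw [← Int.cast_abs]
      exact_mod_cast le_trans b1 (by omega : (a:ℤ) + (τ N ω) ≤ (a:ℤ) + N)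
    have hcb : |((B (τ N ω) ω : ℤ) : ℝ)| ≤ (b:ℝ) + N := by
      rw [← Int.cast_abs]
      exact_mod_cast le_trans b2 (by omega : (b:ℤ) + (τ N ω) ≤ (b:ℤ) + N)
    have hcc : |((C (τ N ω) ω : ℤ) : ℝ)| ≤ (c:ℝ) + N := by
      rw [← Int.cast_abs]
      exact_mod_cast le_trans b3 (by omega : (c:ℤ) + (τ N ω) ≤ (c:ℤ) + N)
    have hf := abs_fM_le (A (τ N ω) ω) (B (τ N ω) ω) (C (τ N ω) ω)
    have hprod : |((A (τ N ω) ω : ℤ) : ℝ)| * |((B (τ N ω) ω : ℤ) : ℝ)| * |((C (τ N ω) ω : ℤ) : ℝ)|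
        ≤ ((a:ℝ)+N)*((b:ℝ)+N)*((c:ℝ)+N) := by
      have h1 : (0:ℝ) ≤ (a:ℝ) + N := by positivity
      have h2 : (0:ℝ) ≤ (b:ℝ) + N := by positivity
      exact mul_le_mul (mul_le_mul hca hcb (abs_nonneg _) h1) hcc (abs_nonneg _)
        (by positivity)
    have hjr : ((τ N ω : ℕ) : ℝ) ≤ (N : ℝ) := by exact_mod_cast hj
    rw [hM']
    calc |fM (A (τ N ω) ω) (B (τ N ω) ω) (C (τ N ω) ω) + ((τ N ω : ℕ) : ℝ)/4|
        ≤ |fM (A (τ N ω) ω) (B (τ N ω) ω) (C (τ N ω) ω)| + |((τ N ω : ℕ) : ℝ)/4| :=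
          abs_add_le _ _
      _ ≤ 2*((a:ℝ)+N)*((b:ℝ)+N)*((c:ℝ)+N) + N := by
          rw [abs_of_nonneg (by positivity : (0:ℝ) ≤ ((τ N ω : ℕ) : ℝ)/4)]
          nlinarith [abs_nonneg (((A (τ N ω) ω : ℤ) : ℝ)), abs_nonneg (((B (τ N ω) ω : ℤ) : ℝ)),
            abs_nonneg (((C (τ N ω) ω : ℤ) : ℝ))]
  have hYint : ∀ N, Integrable (fun ω => M (τ N ω) ω) μ := by
    intro N
    refine Integrable.mono' (integrable_const (2*((a:ℝ)+N)*((b:ℝ)+N)*((c:ℝ)+N) + N))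
      (((hYsm N).mono (hle N)).aestronglyMeasurable) ?_
    filter_upwards [hstep_ae] with ω hg
    simpa [Real.norm_eq_abs] using hYbd N ω hg
  -- supermartingale property of the stopped process along τ
  have hMb : ∀ j ω, (∀ k, ξ k ω ∈
      ({(-1, 0, 0), (1, -1, 0), (0, 1, -1), (0, 0, 1)} : Set (ℤ × ℤ × ℤ))) →
      |M j ω| ≤ 2*((a:ℝ)+j)*((b:ℝ)+j)*((c:ℝ)+j) + j := by
    intro j ω hg
    obtain ⟨b1, b2, b3⟩ := hbound ω hg j
    have hca : |((A j ω : ℤ) : ℝ)| ≤ (a:ℝ) + j := by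
      rw [← Int.cast_abs]; exact_mod_cast b1
    have hcb : |((B j ω : ℤ) : ℝ)| ≤ (b:ℝ) + j := by
      rw [← Int.cast_abs]; exact_mod_cast b2
    have hcc : |((C j ω : ℤ) : ℝ)| ≤ (c:ℝ) + j := by
      rw [← Int.cast_abs]; exact_mod_cast b3
    have hf := abs_fM_le (A j ω) (B j ω) (C j ω)
    have hprod : |((A j ω : ℤ) : ℝ)| * |((B j ω : ℤ) : ℝ)| * |((C j ω : ℤ) : ℝ)|
        ≤ ((a:ℝ)+j)*((b:ℝ)+j)*((c:ℝ)+j) :=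
      mul_le_mul (mul_le_mul hca hcb (abs_nonneg _) (by positivity)) hcc (abs_nonneg _)
        (by positivity)
    rw [hM']
    calc |fM (A j ω) (B j ω) (C j ω) + ((j : ℕ) : ℝ)/4|
        ≤ |fM (A j ω) (B j ω) (C j ω)| + |((j : ℕ) : ℝ)/4| := abs_add_le _ _
      _ ≤ 2*((a:ℝ)+j)*((b:ℝ)+j)*((c:ℝ)+j) + j := by
          rw [abs_of_nonneg (by positivity : (0:ℝ) ≤ ((j : ℕ) : ℝ)/4)]
          nlinarith [abs_nonneg (((A j ω : ℤ) : ℝ)), abs_nonneg (((B j ω : ℤ) : ℝ)),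
            abs_nonneg (((C j ω : ℤ) : ℝ))]
  have hsuper : ∀ n, μ[fun ω => M (τ (n+1) ω) ω|ℱ n] ≤ᵐ[μ] fun ω => M (τ n ω) ω := by
    intro n
    haveI : SigmaFinite (μ.trim (hle n)) := by
      haveI : IsFiniteMeasure (μ.trim (hle n)) := isFiniteMeasure_trim (hle n)
      infer_instance
    set Gs : Set Ω := {ω | ∀ k ≤ n, A k ω * B k ω * C k ω ≠ 0} with hGs_def
    have hGsm : MeasurableSet[ℱ n] Gs := by
      have : Gs = ⋂ (k : ℕ) (_ : k ≤ n), {ω | A k ω * B k ω * C k ω ≠ 0} := by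
        ext ω; simp [hGs_def, Set.mem_iInter]
      rw [this]
      exact MeasurableSet.iInter fun k => MeasurableSet.iInter fun hk => hne_meas hk
    set D : Ω → ℝ := Gs.indicator (fun ω => M (n+1) ω - M n ω) with hD_def
    have hdecomp : (fun ω => M (τ (n+1) ω) ω) = (fun ω => M (τ n ω) ω) + D := by
      funext ω
      simp only [Pi.add_apply, hD_def]
      by_cases hω : ω ∈ Gs
      · rw [Set.indicator_of_mem hω]
        have hGn : ∀ k ≤ n, A k ω * B k ω * C k ω ≠ 0 := hω
        have hτn : τ n ω = n := (hτ_eq_self n ω).mp (fun k hk => hGn k (le_of_lt hk))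
        have hτn1 : τ (n+1) ω = n+1 :=
          (hτ_eq_self (n+1) ω).mp (fun k hk => hGn k (Nat.lt_succ_iff.mp hk))
        rw [hτn, hτn1]; ring
      · rw [Set.indicator_of_notMem hω]
        have hex : ∃ k ≤ n, A k ω * B k ω * C k ω = 0 := by
          by_contra hcon
          push_neg at hcon
          exact hω fun k hk => hcon k hk
        obtain ⟨k, hk, h0⟩ := hex
        have e1 : τ n ω = τ (n+1) ω := by
          simp only [hτ_def]
          rw [if_pos ⟨k, hk, h0⟩, if_pos ⟨k, le_trans hk (Nat.le_succ n), h0⟩]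
        rw [← e1]; ring
    have hDint : Integrable D μ := by
      have : D = (fun ω => M (τ (n+1) ω) ω) - fun ω => M (τ n ω) ω := by
        rw [hdecomp, add_sub_cancel_left]
      rw [this]
      exact (hYint (n+1)).sub (hYint n)
    -- the four one-step functions
    set inn : ℤ × ℤ × ℤ → Ω → ℝ := fun v ω =>
      fM (A n ω + v.1) (B n ω + v.2.1) (C n ω + v.2.2) + ((n:ℝ)+1)/4 - M n ω with hinn_def
    set Dv : ℤ × ℤ × ℤ → Ω → ℝ := fun v => Gs.indicator (inn v) with hDv_def
    set Iv : ℤ × ℤ × ℤ → Ω → ℝ := fun v => Set.indicator {ω | ξ n ω = v} (fun _ => (1:ℝ))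
      with hIv_def
    have hDvsm : ∀ v, StronglyMeasurable[ℱ n] (Dv v) := by
      intro v
      apply Measurable.stronglyMeasurable
      apply Measurable.indicator ?_ hGsm
      obtain ⟨h1, h2, h3⟩ := hABC (le_refl n)
      refine Measurable.sub (Measurable.add ?_ measurable_const) (hMmeasF (le_refl n))
      have : (fun ω => fM (A n ω + v.1) (B n ω + v.2.1) (C n ω + v.2.2))
          = (fun p : ℤ × ℤ × ℤ => fM (p.1 + v.1) (p.2.1 + v.2.1) (p.2.2 + v.2.2))
            ∘ (fun ω => (A n ω, B n ω, C n ω)) := rfl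
      rw [this]
      exact (measurable_of_countable _).comp (h1.prodMk (h2.prodMk h3))
    set K : ℝ := 2*((a:ℝ)+n+1)*((b:ℝ)+n+1)*((c:ℝ)+n+1) + (n+1)
      + (2*((a:ℝ)+n)*((b:ℝ)+n)*((c:ℝ)+n) + n) with hK_def
    have hDvbd : ∀ v : ℤ × ℤ × ℤ, |v.1| ≤ 1 → |v.2.1| ≤ 1 → |v.2.2| ≤ 1 →
        ∀ᵐ ω ∂μ, |Dv v ω| ≤ K := by
      intro v hv1 hv2 hv3
      filter_upwards [hstep_ae] with ω hg
      by_cases hω : ω ∈ Gs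
      · simp only [hDv_def]
        rw [Set.indicator_of_mem hω]
        obtain ⟨b1, b2, b3⟩ := hbound ω hg n
        have hia : |A n ω + v.1| ≤ (a:ℤ) + n + 1 := by
          have q1 := abs_le.mp b1; have q2 := abs_le.mp hv1; rw [abs_le]; omega
        have hib : |B n ω + v.2.1| ≤ (b:ℤ) + n + 1 := by
          have q1 := abs_le.mp b2; have q2 := abs_le.mp hv2; rw [abs_le]; omega
        have hic : |C n ω + v.2.2| ≤ (c:ℤ) + n + 1 := by
          have q1 := abs_le.mp b3; have q2 := abs_le.mp hv3; rw [abs_le]; omega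
        have hca : |((A n ω + v.1 : ℤ) : ℝ)| ≤ (a:ℝ) + n + 1 := by
          rw [← Int.cast_abs]; exact_mod_cast hia
        have hcb : |((B n ω + v.2.1 : ℤ) : ℝ)| ≤ (b:ℝ) + n + 1 := by
          rw [← Int.cast_abs]; exact_mod_cast hib
        have hcc : |((C n ω + v.2.2 : ℤ) : ℝ)| ≤ (c:ℝ) + n + 1 := by
          rw [← Int.cast_abs]; exact_mod_cast hic
        have hf := abs_fM_le (A n ω + v.1) (B n ω + v.2.1) (C n ω + v.2.2)
        have hprod : |((A n ω + v.1 : ℤ) : ℝ)| * |((B n ω + v.2.1 : ℤ) : ℝ)|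
            * |((C n ω + v.2.2 : ℤ) : ℝ)| ≤ ((a:ℝ)+n+1)*((b:ℝ)+n+1)*((c:ℝ)+n+1) :=
          mul_le_mul (mul_le_mul hca hcb (abs_nonneg _) (by positivity)) hcc (abs_nonneg _)
            (by positivity)
        have hMn := hMb n ω hg
        simp only [hinn_def, hK_def]
        have habs := abs_le.mp hMn
        have hfle : |fM (A n ω + v.1) (B n ω + v.2.1) (C n ω + v.2.2)|
            ≤ 2*((a:ℝ)+n+1)*((b:ℝ)+n+1)*((c:ℝ)+n+1) := by
          refine le_trans hf ?_
          nlinarith [abs_nonneg (((A n ω + v.1 : ℤ) : ℝ)), abs_nonneg (((B n ω + v.2.1 : ℤ) : ℝ)),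
            abs_nonneg (((C n ω + v.2.2 : ℤ) : ℝ))]
        have habs2 := abs_le.mp hfle
        have hn0 : (0:ℝ) ≤ (n:ℝ) := Nat.cast_nonneg n
        rw [abs_le]
        constructor <;> linarith
      · simp only [hDv_def]
        rw [Set.indicator_of_notMem hω, abs_zero, hK_def]
        positivity
    have hDvint : ∀ v : ℤ × ℤ × ℤ, |v.1| ≤ 1 → |v.2.1| ≤ 1 → |v.2.2| ≤ 1 →
        Integrable (Dv v) μ := by
      intro v h1 h2 h3
      refine Integrable.mono' (integrable_const K)
        (((hDvsm v).mono (hle n)).aestronglyMeasurable) ?_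
      filter_upwards [hDvbd v h1 h2 h3] with ω hω
      simpa [Real.norm_eq_abs] using hω
    have hIvint : ∀ v : ℤ × ℤ × ℤ, Integrable (Iv v) μ :=
      fun v => (integrable_const (1:ℝ)).indicator (hmeas n (measurableSet_singleton v))
    have hDvIvint : ∀ v : ℤ × ℤ × ℤ, |v.1| ≤ 1 → |v.2.1| ≤ 1 → |v.2.2| ≤ 1 →
        Integrable (Dv v * Iv v) μ := by
      intro v h1 h2 h3
      refine Integrable.mono' (integrable_const K) ?_ ?_
      · exact (((hDvsm v).mono (hle n)).aestronglyMeasurable).mul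
          ((stronglyMeasurable_const.indicator
            (hmeas n (measurableSet_singleton v))).aestronglyMeasurable)
      · filter_upwards [hDvbd v h1 h2 h3] with ω hω
        rw [Pi.mul_apply, Real.norm_eq_abs, abs_mul]
        have hK0 : 0 ≤ K := le_trans (abs_nonneg _) hω
        have : |Iv v ω| ≤ 1 := by
          simp only [hIv_def]
          by_cases h : ω ∈ {ω | ξ n ω = v}
          · rw [Set.indicator_of_mem h]; norm_num
          · rw [Set.indicator_of_notMem h]; norm_num
        nlinarith [abs_nonneg (Dv v ω), abs_nonneg (Iv v ω)]
    -- independence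
    have hInd : Indep (MeasurableSpace.comap (ξ n) inferInstance) (ℱ n) μ := by
      have h := indep_iSup_of_disjoint
        (m := fun k => MeasurableSpace.comap (ξ k) inferInstance)
        (fun k => (hmeas k).comap_le) hindep.iIndep
        (S := {n}) (T := {k | k < n})
        (Set.disjoint_left.mpr (by intro i hi hi2; simp at hi hi2; omega))
      have e1 : (⨆ i ∈ ({n} : Set ℕ), MeasurableSpace.comap (ξ i) inferInstance)
          = MeasurableSpace.comap (ξ n) inferInstance := by simp
      have e2 : (⨆ i ∈ {k | k < n}, MeasurableSpace.comap (ξ i) inferInstance) = ℱ n := by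
        rw [hℱ]
        apply le_antisymm
        · exact iSup₂_le fun k hk =>
            le_iSup₂ (f := fun i (_ : i ∈ Finset.range n) =>
              MeasurableSpace.comap (ξ i) inferInstance) k (Finset.mem_range.mpr hk)
        · exact iSup₂_le fun k hk =>
            le_iSup₂ (f := fun i (_ : i ∈ {k | k < n}) =>
              MeasurableSpace.comap (ξ i) inferInstance) k (Finset.mem_range.mp hk)
      rw [e1, e2] at h
      exact h
    have hIvce : ∀ v : ℤ × ℤ × ℤ,
        v ∈ ({(-1, 0, 0), (1, -1, 0), (0, 1, -1), (0, 0, 1)} : Set (ℤ × ℤ × ℤ)) →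
        μ[Iv v|ℱ n] =ᵐ[μ] fun _ => (4⁻¹ : ℝ) := by
      intro v hv
      have hsm : StronglyMeasurable[MeasurableSpace.comap (ξ n) inferInstance] (Iv v) := by
        simp only [hIv_def]
        exact stronglyMeasurable_const.indicator ⟨{v}, measurableSet_singleton v, rfl⟩
      have h := condExp_indep_eq ((hmeas n).comap_le) (hle n) hsm hInd
      have hI : ∫ ω, Iv v ω ∂μ = 4⁻¹ := by
        simp only [hIv_def]
        rw [integral_indicator_const (1:ℝ)
          (show MeasurableSet {ω | ξ n ω = v} from hmeas n (measurableSet_singleton v))]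
        rw [measureReal_def, hunif n v hv]
        rw [smul_eq_mul, mul_one, ENNReal.toReal_div]
        norm_num
      rw [hI] at h
      exact h
    -- conditional expectation of D
    have hDeq : D =ᵐ[μ] fun ω => Dv (-1,0,0) ω * Iv (-1,0,0) ω
        + Dv (1,-1,0) ω * Iv (1,-1,0) ω + Dv (0,1,-1) ω * Iv (0,1,-1) ω
        + Dv (0,0,1) ω * Iv (0,0,1) ω := by
      filter_upwards [hstep_ae] with ω hg
      have hgn := hg n
      simp only [Set.mem_insert_iff, Set.mem_singleton_iff] at hgn
      have hval : ∀ v : ℤ × ℤ × ℤ, ξ n ω = v → D ω = Dv v ω := by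
        intro v hv
        simp only [hD_def, hDv_def]
        by_cases hω : ω ∈ Gs
        · rw [Set.indicator_of_mem hω, Set.indicator_of_mem hω]
          simp only [hinn_def]
          rw [hM' (n+1) ω, hA n ω, hB n ω, hC n ω, hv]
          push_cast
          ring
        · rw [Set.indicator_of_notMem hω, Set.indicator_of_notMem hω]
      have hone : ∀ v : ℤ × ℤ × ℤ, ξ n ω = v → Iv v ω = 1 := by
        intro v hv
        simp only [hIv_def]
        exact Set.indicator_of_mem (show ω ∈ {ω' | ξ n ω' = v} from hv) _
      have hzero : ∀ v : ℤ × ℤ × ℤ, ξ n ω ≠ v → Iv v ω = 0 := by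
        intro v hv
        simp only [hIv_def]
        exact Set.indicator_of_notMem (show ω ∉ {ω' | ξ n ω' = v} from hv) _
      rcases hgn with hv | hv | hv | hv
      · rw [hval _ hv, hone _ hv, hzero (1,-1,0) (by rw [hv]; decide),
          hzero (0,1,-1) (by rw [hv]; decide), hzero (0,0,1) (by rw [hv]; decide)]
        ring
      · rw [hval _ hv, hone _ hv, hzero (-1,0,0) (by rw [hv]; decide),
          hzero (0,1,-1) (by rw [hv]; decide), hzero (0,0,1) (by rw [hv]; decide)]
        ring
      · rw [hval _ hv, hone _ hv, hzero (-1,0,0) (by rw [hv]; decide),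
          hzero (1,-1,0) (by rw [hv]; decide), hzero (0,0,1) (by rw [hv]; decide)]
        ring
      · rw [hval _ hv, hone _ hv, hzero (-1,0,0) (by rw [hv]; decide),
          hzero (1,-1,0) (by rw [hv]; decide), hzero (0,1,-1) (by rw [hv]; decide)]
        ring
    have hce1 : ∀ v : ℤ × ℤ × ℤ,
        v ∈ ({(-1, 0, 0), (1, -1, 0), (0, 1, -1), (0, 0, 1)} : Set (ℤ × ℤ × ℤ)) →
        (|v.1| ≤ 1) → (|v.2.1| ≤ 1) → (|v.2.2| ≤ 1) →
        μ[Dv v * Iv v|ℱ n] =ᵐ[μ] fun ω => Dv v ω * 4⁻¹ := by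
      intro v hv h1 h2 h3
      have hmul := condExp_mul_of_stronglyMeasurable_left (hDvsm v) (hDvIvint v h1 h2 h3) (hIvint v)
      refine hmul.trans ?_
      filter_upwards [hIvce v hv] with ω hω
      rw [Pi.mul_apply, hω]
    -- combine
    have hsum : μ[D|ℱ n] ≤ᵐ[μ] 0 := by
      have hi1 := hDvIvint (-1,0,0) (by norm_num) (by norm_num) (by norm_num)
      have hi2 := hDvIvint (1,-1,0) (by norm_num) (by norm_num) (by norm_num)
      have hi3 := hDvIvint (0,1,-1) (by norm_num) (by norm_num) (by norm_num)
      have hi4 := hDvIvint (0,0,1) (by norm_num) (by norm_num) (by norm_num)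
      have hD4 : μ[D|ℱ n] =ᵐ[μ] fun ω => Dv (-1,0,0) ω * 4⁻¹ + Dv (1,-1,0) ω * 4⁻¹
          + Dv (0,1,-1) ω * 4⁻¹ + Dv (0,0,1) ω * 4⁻¹ := by
        have e0 := condExp_congr_ae (m := ℱ n) hDeq
        have heq : (fun ω => Dv (-1,0,0) ω * Iv (-1,0,0) ω
            + Dv (1,-1,0) ω * Iv (1,-1,0) ω + Dv (0,1,-1) ω * Iv (0,1,-1) ω
            + Dv (0,0,1) ω * Iv (0,0,1) ω)
            = (Dv (-1,0,0) * Iv (-1,0,0) + Dv (1,-1,0) * Iv (1,-1,0))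
              + (Dv (0,1,-1) * Iv (0,1,-1) + Dv (0,0,1) * Iv (0,0,1)) := by
          funext ω; simp only [Pi.add_apply, Pi.mul_apply]; ring
        rw [heq] at e0
        have e1 := condExp_add (μ := μ) (m := ℱ n) (hi1.add hi2) (hi3.add hi4)
        have e2 := condExp_add (μ := μ) (m := ℱ n) hi1 hi2
        have e3 := condExp_add (μ := μ) (m := ℱ n) hi3 hi4
        have c1 := hce1 (-1,0,0) (by simp) (by norm_num) (by norm_num) (by norm_num)
        have c2 := hce1 (1,-1,0) (by simp) (by norm_num) (by norm_num) (by norm_num)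
        have c3 := hce1 (0,1,-1) (by simp) (by norm_num) (by norm_num) (by norm_num)
        have c4 := hce1 (0,0,1) (by simp) (by norm_num) (by norm_num) (by norm_num)
        filter_upwards [e0, e1, e2, e3, c1, c2, c3, c4] with ω w0 w1 w2 w3 u1 u2 u3 u4
        rw [w0, w1, Pi.add_apply, w2, Pi.add_apply, w3, Pi.add_apply, u1, u2, u3, u4]
        ring
      refine hD4.trans_le ?_
      filter_upwards [hstep_ae] with ω hg
      simp only [Pi.zero_apply]
      by_cases hω : ω ∈ Gs
      · have hpos' := hpos1 ω hg n hω
        obtain ⟨x1, y1, z1⟩ := hpos'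
        have hk := key (A n ω) (B n ω) (C n ω) x1 y1 z1
        have hval : ∀ v : ℤ × ℤ × ℤ, Dv v ω = inn v ω := by
          intro v; simp only [hDv_def]; exact Set.indicator_of_mem hω _
        rw [hval, hval, hval, hval]
        simp only [hinn_def]
        rw [hM' n ω]
        have e1 : A n ω + (-1 : ℤ) = A n ω - 1 := by ring
        have e2 : B n ω + (-1 : ℤ) = B n ω - 1 := by ring
        have e3 : C n ω + (-1 : ℤ) = C n ω - 1 := by ring
        have e4 : A n ω + (0 : ℤ) = A n ω := by ring
        have e5 : B n ω + (0 : ℤ) = B n ω := by ring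
        have e6 : C n ω + (0 : ℤ) = C n ω := by ring
        simp only [e1, e2, e3, e4, e5, e6]
        nlinarith [hk]
      · have hval : ∀ v : ℤ × ℤ × ℤ, Dv v ω = 0 := by
          intro v; simp only [hDv_def]; exact Set.indicator_of_notMem hω _
        rw [hval, hval, hval, hval]
        norm_num
    -- final assembly
    have hYce : μ[fun ω => M (τ n ω) ω|ℱ n] = fun ω => M (τ n ω) ω :=
      condExp_of_stronglyMeasurable (hle n) (hYsm n) (hYint n)
    calc μ[fun ω => M (τ (n+1) ω) ω|ℱ n]
        = μ[(fun ω => M (τ n ω) ω) + D|ℱ n] := by rw [hdecomp]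
      _ ≤ᵐ[μ] fun ω => M (τ n ω) ω := by
          have hadd := condExp_add (μ := μ) (m := ℱ n) (hYint n) hDint
          filter_upwards [hadd, hsum] with ω w1 w2
          rw [w1, Pi.add_apply, hYce]
          simpa using w2
  -- expectation bound
  have hEY : ∀ N, ∫ ω, M (τ N ω) ω ∂μ ≤ fM a b c := by
    intro N
    induction N with
    | zero =>
      have h0 : (fun ω => M (τ 0 ω) ω) = fun _ => fM a b c := by
        funext ω
        have ht0 : τ 0 ω = 0 := Nat.le_zero.mp (hτ_le 0 ω)
        rw [ht0, hM' 0 ω, hA0, hB0, hC0]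
        norm_num
      rw [h0, integral_const]
      simp
    | succ N ih =>
      haveI : SigmaFinite (μ.trim (hle N)) := by
        haveI : IsFiniteMeasure (μ.trim (hle N)) := isFiniteMeasure_trim (hle N)
        infer_instance
      calc ∫ ω, M (τ (N+1) ω) ω ∂μ
          = ∫ ω, (μ[fun ω => M (τ (N+1) ω) ω|ℱ N]) ω ∂μ :=
            (integral_condExp (hle N)).symm
        _ ≤ ∫ ω, M (τ N ω) ω ∂μ :=
            integral_mono_ae integrable_condExp (hYint N) (hsuper N)
        _ ≤ fM a b c := ih
  -- the never-hitting set is null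
  have hBad : μ {ω | ∀ m, A m ω * B m ω * C m ω ≠ 0} = 0 := by
    have hBmeas : MeasurableSet {ω | ∀ m, A m ω * B m ω * C m ω ≠ 0} := by
      have : {ω | ∀ m, A m ω * B m ω * C m ω ≠ 0}
          = ⋂ m, {ω | A m ω * B m ω * C m ω ≠ 0} := by
        ext ω; simp [Set.mem_iInter]
      rw [this]
      exact MeasurableSet.iInter fun m => hle m _ (hne_meas (le_refl m))
    by_contra hne
    set t := (μ {ω | ∀ m, A m ω * B m ω * C m ω ≠ 0}).toReal with ht_def
    have htpos : 0 < t := ENNReal.toReal_pos hne (measure_ne_top μ _)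
    have hkey : ∀ N : ℕ, (N:ℝ)/4 * t ≤ fM a b c := by
      intro N
      have hind : ∀ᵐ ω ∂μ, Set.indicator {ω | ∀ m, A m ω * B m ω * C m ω ≠ 0}
          (fun _ => (N:ℝ)/4) ω ≤ M (τ N ω) ω := by
        filter_upwards [hstep_ae] with ω hg
        by_cases hω : ω ∈ {ω | ∀ m, A m ω * B m ω * C m ω ≠ 0}
        · rw [Set.indicator_of_mem hω]
          have hτN : τ N ω = N := (hτ_eq_self N ω).mp (fun k _ => hω k)
          rw [hτN, hM' N ω]
          obtain ⟨q1, q2, q3⟩ := hpos ω hg N (fun k _ => hω k)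
          have := fM_nonneg q1 q2 q3
          linarith
        · rw [Set.indicator_of_notMem hω]
          obtain ⟨q1, q2, q3⟩ := hpos ω hg (τ N ω) (hτ_first N ω)
          rw [hM' _ ω]
          have h1 := fM_nonneg q1 q2 q3
          have h2 : (0:ℝ) ≤ ((τ N ω : ℕ) : ℝ) := by positivity
          linarith
      calc (N:ℝ)/4 * t
          = ∫ ω, Set.indicator {ω | ∀ m, A m ω * B m ω * C m ω ≠ 0}
              (fun _ => (N:ℝ)/4) ω ∂μ := by
            rw [integral_indicator_const _ hBmeas, smul_eq_mul, measureReal_def, ← ht_def]; ring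
        _ ≤ ∫ ω, M (τ N ω) ω ∂μ :=
            integral_mono_ae ((integrable_const _).indicator hBmeas) (hYint N) hind
        _ ≤ fM a b c := hEY N
    obtain ⟨N, hN⟩ := exists_nat_gt (4 * fM a b c / t)
    have h2 := hkey N
    rw [div_lt_iff₀ htpos] at hN
    nlinarith
  -- conclusion
  intro n
  have hae : ∀ᵐ ω ∂μ, ∃ m, A m ω * B m ω * C m ω = 0 := by
    have := measure_eq_zero_iff_ae_notMem.mp hBad
    filter_upwards [this] with ω hω
    by_contra hcon
    push_neg at hcon
    exact hω hcon
  have hmin : ∀ N ω, (∃ m, A m ω * B m ω * C m ω = 0) → min N (T ω) = τ N ω := by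
    intro N ω hex
    rw [hT ω]
    simp only [hτ_def]
    split
    · next h =>
      obtain ⟨k, hk, h0⟩ := h
      exact min_eq_right (le_trans (Nat.sInf_le h0) hk)
    · next h =>
      refine min_eq_left ?_
      obtain ⟨m, hm⟩ := hex
      have hmem := Nat.sInf_mem (⟨m, hm⟩ : {n | A n ω * B n ω * C n ω = 0}.Nonempty)
      by_contra hcon
      push_neg at hcon
      exact h ⟨_, le_of_lt hcon, hmem⟩
  have h1 : (fun ω => M (min (n + 1) (T ω)) ω) =ᵐ[μ] fun ω => M (τ (n+1) ω) ω := by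
    filter_upwards [hae] with ω hω
    rw [hmin (n+1) ω hω]
  have h2 : (fun ω => M (min n (T ω)) ω) =ᵐ[μ] fun ω => M (τ n ω) ω := by
    filter_upwards [hae] with ω hω
    rw [hmin n ω hω]
  calc μ[fun ω => M (min (n + 1) (T ω)) ω|ℱ n]
      =ᵐ[μ] μ[fun ω => M (τ (n+1) ω) ω|ℱ n] := condExp_congr_ae h1
    _ ≤ᵐ[μ] fun ω => M (τ n ω) ω := hsuper n
    _ =ᵐ[μ] fun ω => M (min n (T ω)) ω := h2.symm
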